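/- With notation as in the definition of A_x(ε): the line sections A_x(ε | R=R', r=r') = {α : (R',r',α) ∈ A_x(ε)}, A_x(ε | R=R', α=α') = {r : (R',r,α') ∈ A_x(ε)}, and A_x(ε | r=r', α=α') = {R : (R,r',α) ∈ A_x(ε)} are all (possibly degenerate or empty) intervals in R₊. -/

import Mathlib

/-- A strong deformation retraction of the topological pair `(A', B')` onto the
subpair `(A, B)`: a homotopy `F` on `A' × [0,1]` starting at the identity,
ending in `A` (resp. carrying `B'` into `B`), keeping `A'` (resp. `B'`)
invariant and fixing `A` pointwise. -/
def PairSDR {X : Type*} [TopologicalSpace X] (A B A' B' : Set X) : Prop :=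
  ∃ F : X × ℝ → X,
    ContinuousOn F (A' ×ˢ Set.Icc (0 : ℝ) 1) ∧
    (∀ x ∈ A', ∀ t ∈ Set.Icc (0 : ℝ) 1, F (x, t) ∈ A') ∧
    (∀ x ∈ A', F (x, 0) = x) ∧
    (∀ x ∈ A', F (x, 1) ∈ A) ∧
    (∀ x ∈ B', ∀ t ∈ Set.Icc (0 : ℝ) 1, F (x, t) ∈ B') ∧
    (∀ x ∈ B', F (x, 1) ∈ B) ∧
    (∀ x ∈ A, ∀ t ∈ Set.Icc (0 : ℝ) 1, F (x, t) = x)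

/-- An abstract (relative, all-degrees) homology theory on pairs of subsets of a
topological space `X`: abelian groups `H A B` (playing the role of
`H(A, A − ·)`-type relative homology `H_*(A,B)`), functorial inclusion-induced
homomorphisms, invariant under strong deformation retractions of pairs.  Singular
homology satisfies these axioms. -/
structure HomTheory (X : Type*) [TopologicalSpace X] where
  H : Set X → Set X → AddCommGrpCat.{u_2}
  map : ∀ {A B A' B' : Set X}, A ⊆ A' → B ⊆ B' → (H A B →+ H A' B')
  map_id : ∀ {A B : Set X},
    map (subset_refl A) (subset_refl B) = AddMonoidHom.id (H A B)
  map_comp : ∀ {A B A' B' A'' B'' : Set X} (h1 : A ⊆ A') (h2 : B ⊆ B')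
    (h3 : A' ⊆ A'') (h4 : B' ⊆ B''),
    (map h3 h4).comp (map h1 h2) = map (h1.trans h3) (h2.trans h4)
  sdr_bij : ∀ {A B A' B' : Set X} (hA : A ⊆ A') (hB : B ⊆ B'),
    PairSDR A B A' B' → Function.Bijective (map hA hB)

/-- The set `A_x(ε)` of admissible scale triples `(R, r, α)` at a point `x` of a
compact set `K`, relative to a homology theory `T`.  Writing
`F(a,b) = H(D_a(K), D_a(K) − B_b(x))` (with `F(0,0) = H(K, K − {x})` and
`D_a(K)` the closed `a`-neighborhood `cthickening a K`), a triple with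
`R ≥ r > α ≥ ε ≥ 0` is admissible if: every `D_ρ(x)`, `ρ ∈ (0,R]`, is a
topological ball; the inclusion-induced `i₊ : F(0,R) → F(ε,R)` is injective and
the restriction of `j₊ : F(ε,R) → F(α,r)` to `im i₊` is an isomorphism onto
`im j₊`; and the maps `F(0,R) → F(0,ρ) → F(0,0)` are isomorphisms for
`ρ ∈ [r,R]`. -/
def Amem {X : Type*} [MetricSpace X] (T : HomTheory X) (K : Set X) (x : X)
    (ε R r α : ℝ) : Prop :=
  0 ≤ ε ∧ ε ≤ α ∧ α < r ∧ r ≤ R ∧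
  (∀ ρ, 0 < ρ → ρ ≤ R → ∃ m : ℕ, Nonempty
    (↥(Metric.closedBall x ρ) ≃ₜ
      ↥(Metric.closedBall (0 : EuclideanSpace ℝ (Fin m)) 1))) ∧
  (∀ (hεα : ε ≤ α) (hrR : r ≤ R),
    let i : T.H K (K \ Metric.ball x R) →+
        T.H (Metric.cthickening ε K) (Metric.cthickening ε K \ Metric.ball x R) :=
      T.map (Metric.self_subset_cthickening K)
        (Set.diff_subset_diff_left (Metric.self_subset_cthickening K))
    let j : T.H (Metric.cthickening ε K) (Metric.cthickening ε K \ Metric.ball x R) →+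
        T.H (Metric.cthickening α K) (Metric.cthickening α K \ Metric.ball x r) :=
      T.map (Metric.cthickening_mono hεα K)
        (Set.diff_subset_diff (Metric.cthickening_mono hεα K)
          (Metric.ball_subset_ball hrR))
    Function.Injective i ∧ Set.BijOn j (Set.range i) (Set.range j)) ∧
  (∀ ρ, 0 < ρ → r ≤ ρ → ∀ (hρR : ρ ≤ R) (hρ0 : 0 < ρ),
    Function.Bijective
      (T.map (subset_refl K)
        (Set.diff_subset_diff_right (Metric.ball_subset_ball hρR)) :
        T.H K (K \ Metric.ball x R) →+ T.H K (K \ Metric.ball x ρ)) ∧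
    Function.Bijective
      (T.map (subset_refl K)
        (Set.diff_subset_diff_right
          (Set.singleton_subset_iff.mpr (Metric.mem_ball_self hρ0))) :
        T.H K (K \ Metric.ball x ρ) →+ T.H K (K \ {x})))

private lemma bijOn_mid {B C C1 C2 : Type*} (S : Set B) (j : B → C) (j1 : B → C1)
    (j2 : B → C2) (k1 : C1 → C) (k2 : C → C2)
    (hf1 : ∀ b, j b = k1 (j1 b)) (hf2 : ∀ b, j2 b = k2 (j b))
    (hinj : Set.InjOn j2 S) (hsurj : Set.SurjOn j1 S (Set.range j1)) :
    Set.BijOn j S (Set.range j) := by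
  refine ⟨fun a _ => ⟨a, rfl⟩, fun a ha b hb hab => hinj ha hb ?_, ?_⟩
  · rw [hf2 a, hab, ← hf2 b]
  · rintro y ⟨z, rfl⟩
    obtain ⟨w, hw, hjw⟩ := hsurj ⟨z, rfl⟩
    exact ⟨w, hw, by rw [hf1 w, hjw, ← hf1 z]⟩

/-- Two-out-of-three for a chain of pairs `(A0,B0) ⊆ (Aa,Ba) ⊆ (Ab,Bb) ⊆ (Ac,Bc)`:
if the maps to the first and last stages are "good" relative to `range i`, so is
the middle one. -/
private lemma mid_step {X : Type*} [TopologicalSpace X] (T : HomTheory X)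
    {QA QB A0 B0 Aa Ba Ab Bb Ac Bc : Set X}
    (hiA : QA ⊆ A0) (hiB : QB ⊆ B0)
    (h0aA : A0 ⊆ Aa) (h0aB : B0 ⊆ Ba) (habA : Aa ⊆ Ab) (habB : Ba ⊆ Bb)
    (hbcA : Ab ⊆ Ac) (hbcB : Bb ⊆ Bc)
    (hinjc : Set.InjOn (T.map (h0aA.trans (habA.trans hbcA))
      (h0aB.trans (habB.trans hbcB))) (Set.range (T.map hiA hiB)))
    (hsurja : Set.SurjOn (T.map h0aA h0aB) (Set.range (T.map hiA hiB))
      (Set.range (T.map h0aA h0aB))) :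
    Set.BijOn (T.map (h0aA.trans habA) (h0aB.trans habB))
      (Set.range (T.map hiA hiB))
      (Set.range (T.map (h0aA.trans habA) (h0aB.trans habB))) := by
  have hc1 := T.map_comp h0aA h0aB habA habB
  have hc2 := T.map_comp (h0aA.trans habA) (h0aB.trans habB) hbcA hbcB
  have hf1 : ∀ b, (T.map (h0aA.trans habA) (h0aB.trans habB)) b
      = (T.map habA habB) ((T.map h0aA h0aB) b) :=
    fun b => (DFunLike.congr_fun hc1 b).symm
  have hf2 : ∀ b, (T.map (h0aA.trans (habA.trans hbcA))
        (h0aB.trans (habB.trans hbcB))) b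
      = (T.map hbcA hbcB) ((T.map (h0aA.trans habA) (h0aB.trans habB)) b) :=
    fun b => (DFunLike.congr_fun hc2 b).symm
  exact bijOn_mid _ _ _ _ _ _ hf1 hf2 hinjc hsurja

/-- The interpolation argument for the `R`-section: transfer injectivity of `i`
and the `BijOn` property of `j` from the scale `R₁` up to `R ≥ R₁`, given that
the comparison map `p` between the `F(0,·)` stages is bijective. -/
private lemma mid_R {X : Type*} [TopologicalSpace X] (T : HomTheory X)
    {A B B1 Aε Cε Cε1 Aα D : Set X}
    (hAB : A ⊆ Aε) (hB : B ⊆ Cε) (hBR : B ⊆ B1) (hB1 : B1 ⊆ Cε1)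
    (hCC : Cε ⊆ Cε1) (hAα : Aε ⊆ Aα) (hCD : Cε ⊆ D) (hC1D : Cε1 ⊆ D)
    (hp : Function.Bijective (T.map (subset_refl A) hBR))
    (hinj1 : Function.Injective (T.map hAB hB1))
    (hb1 : Set.BijOn (T.map hAα hC1D) (Set.range (T.map hAB hB1))
      (Set.range (T.map hAα hC1D))) :
    Function.Injective (T.map hAB hB) ∧
      Set.BijOn (T.map hAα hCD) (Set.range (T.map hAB hB))
        (Set.range (T.map hAα hCD)) := by
  have hsq : ∀ a, (T.map (subset_refl Aε) hCC) ((T.map hAB hB) a)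
      = (T.map hAB hB1) ((T.map (subset_refl A) hBR) a) := by
    intro a
    have h1 := DFunLike.congr_fun (T.map_comp hAB hB (subset_refl Aε) hCC) a
    have h2 := DFunLike.congr_fun (T.map_comp (subset_refl A) hBR hAB hB1) a
    exact h1.trans h2.symm
  have hj : ∀ a, (T.map hAα hCD) a
      = (T.map hAα hC1D) ((T.map (subset_refl Aε) hCC) a) :=
    fun a => (DFunLike.congr_fun (T.map_comp (subset_refl Aε) hCC hAα hC1D) a).symm
  constructor
  · intro a b hab
    have : (T.map hAB hB1) ((T.map (subset_refl A) hBR) a)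
        = (T.map hAB hB1) ((T.map (subset_refl A) hBR) b) := by
      rw [← hsq, ← hsq, hab]
    exact hp.injective (hinj1 this)
  · refine ⟨fun a _ => ⟨a, rfl⟩, ?_, ?_⟩
    · rintro a ⟨a₀, rfl⟩ b ⟨b₀, rfl⟩ hab
      have hq : (T.map (subset_refl Aε) hCC) ((T.map hAB hB) a₀)
          = (T.map (subset_refl Aε) hCC) ((T.map hAB hB) b₀) := by
        refine hb1.injOn ?_ ?_ (by rw [← hj, ← hj, hab])
        · rw [hsq]; exact ⟨_, rfl⟩
        · rw [hsq]; exact ⟨_, rfl⟩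
      rw [hsq, hsq] at hq
      have := hp.injective (hinj1 hq)
      rw [this]
    · rintro y ⟨z, rfl⟩
      have hz : (T.map hAα hC1D) ((T.map (subset_refl Aε) hCC) z)
          ∈ Set.range (T.map hAα hC1D) := ⟨_, rfl⟩
      obtain ⟨w₁, ⟨v, rfl⟩, hw⟩ := hb1.surjOn hz
      obtain ⟨v₀, rfl⟩ := hp.surjective v
      refine ⟨(T.map hAB hB) v₀, ⟨v₀, rfl⟩, ?_⟩
      rw [hj, hsq, hw, ← hj]


/-- The line sections of `A_x(ε)` — fixing two of the three scales
`R`, `r`, `α` and varying the third — are (possibly degenerate or empty)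
intervals of real numbers, i.e. order-connected subsets of `ℝ`. -/
theorem stmt13 {X : Type*} [MetricSpace X] (T : HomTheory X) (K : Set X)
    (hK : IsCompact K) (hKne : K.Nonempty) (x : X) (hx : x ∈ K)
    (ε R' r' α' : ℝ) :
    {α : ℝ | Amem T K x ε R' r' α}.OrdConnected ∧
    {r : ℝ | Amem T K x ε R' r α'}.OrdConnected ∧
    {R : ℝ | Amem T K x ε R r' α'}.OrdConnected := by
  refine ⟨⟨?_⟩, ⟨?_⟩, ⟨?_⟩⟩
  · -- α-section
    rintro α₁ h₁ α₂ h₂ α ⟨hα1, hα2⟩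
    obtain ⟨e0, e1, e2, e3, e4, e5, e6⟩ := h₁
    obtain ⟨f0, f1, f2, f3, f4, f5, f6⟩ := h₂
    refine ⟨e0, e1.trans hα1, lt_of_le_of_lt hα2 f2, e3, e4, ?_, e6⟩
    intro hεα hrR
    obtain ⟨hi1, hb1⟩ := e5 e1 hrR
    obtain ⟨hi2, hb2⟩ := f5 f1 hrR
    refine ⟨hi1, ?_⟩
    exact mid_step T (Metric.self_subset_cthickening K)
      (Set.diff_subset_diff_left (Metric.self_subset_cthickening K))
      (Metric.cthickening_mono e1 K)
      (Set.diff_subset_diff (Metric.cthickening_mono e1 K)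
        (Metric.ball_subset_ball hrR))
      (Metric.cthickening_mono hα1 K)
      (Set.diff_subset_diff (Metric.cthickening_mono hα1 K) (subset_refl _))
      (Metric.cthickening_mono hα2 K)
      (Set.diff_subset_diff (Metric.cthickening_mono hα2 K) (subset_refl _))
      hb2.injOn hb1.surjOn
  · -- r-section
    rintro r₁ h₁ r₂ h₂ r ⟨hr1, hr2⟩
    obtain ⟨e0, e1, e2, e3, e4, e5, e6⟩ := h₁
    obtain ⟨f0, f1, f2, f3, f4, f5, f6⟩ := h₂
    refine ⟨e0, e1, lt_of_lt_of_le e2 hr1, hr2.trans f3, e4,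
      ?_, fun ρ h0 hrρ => e6 ρ h0 (hr1.trans hrρ)⟩
    intro hεα hrR
    obtain ⟨hi1, hb1⟩ := e5 e1 e3
    obtain ⟨hi2, hb2⟩ := f5 f1 f3
    refine ⟨hi1, ?_⟩
    exact mid_step T (Metric.self_subset_cthickening K)
      (Set.diff_subset_diff_left (Metric.self_subset_cthickening K))
      (Metric.cthickening_mono e1 K)
      (Set.diff_subset_diff (Metric.cthickening_mono e1 K)
        (Metric.ball_subset_ball f3))
      (subset_refl _)
      (Set.diff_subset_diff (subset_refl _) (Metric.ball_subset_ball hr2))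
      (subset_refl _)
      (Set.diff_subset_diff (subset_refl _) (Metric.ball_subset_ball hr1))
      hb1.injOn hb2.surjOn
  · -- R-section
    rintro R₁ h₁ R₂ h₂ R ⟨hR1, hR2⟩
    obtain ⟨e0, e1, e2, e3, e4, e5, e6⟩ := h₁
    obtain ⟨f0, f1, f2, f3, f4, f5, f6⟩ := h₂
    have hr'R : r' ≤ R := e3.trans hR1
    have hr'0 : 0 < r' := lt_of_le_of_lt (e0.trans e1) e2
    have hstep : ∀ ρ (h0 : 0 < ρ) (hr : r' ≤ ρ) (hρR : ρ ≤ R),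
        Function.Bijective (T.map (subset_refl K)
          (Set.diff_subset_diff_right (Metric.ball_subset_ball hρR)) :
          T.H K (K \ Metric.ball x R) →+ T.H K (K \ Metric.ball x ρ)) := by
      intro ρ h0 hr hρR
      have hbigρ := (f6 ρ h0 hr (hρR.trans hR2) h0).1
      have hbigR := (f6 R (h0.trans_le hρR) (hr.trans hρR) hR2 (h0.trans_le hρR)).1
      have hcomp : (T.map (subset_refl K)
            (Set.diff_subset_diff_right (Metric.ball_subset_ball hρR)) :
            T.H K (K \ Metric.ball x R) →+ T.H K (K \ Metric.ball x ρ)).comp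
          (T.map (subset_refl K)
            (Set.diff_subset_diff_right (Metric.ball_subset_ball hR2)) :
            T.H K (K \ Metric.ball x R₂) →+ T.H K (K \ Metric.ball x R))
          = T.map (subset_refl K)
            (Set.diff_subset_diff_right (Metric.ball_subset_ball (hρR.trans hR2))) :=
        T.map_comp _ _ _ _
      have h5 : Function.Bijective
          ((T.map (subset_refl K)
            (Set.diff_subset_diff_right (Metric.ball_subset_ball hρR)) :
            T.H K (K \ Metric.ball x R) →+ T.H K (K \ Metric.ball x ρ)) ∘
           (T.map (subset_refl K)
            (Set.diff_subset_diff_right (Metric.ball_subset_ball hR2)) :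
            T.H K (K \ Metric.ball x R₂) →+ T.H K (K \ Metric.ball x R))) := by
        rw [← AddMonoidHom.coe_comp, hcomp]; exact hbigρ
      exact (Function.Bijective.of_comp_iff _ hbigR).mp h5
    refine ⟨e0, e1, e2, hr'R,
      fun ρ h0 hρR => f4 ρ h0 (hρR.trans hR2), ?_,
      fun ρ h0 hrρ hρR hρ0 => ⟨hstep ρ h0 hrρ hρR, (f6 ρ h0 hrρ (hρR.trans hR2) hρ0).2⟩⟩
    intro hεα hrR
    obtain ⟨hi1, hb1⟩ := e5 e1 e3
    have hp := hstep R₁ (hr'0.trans_le e3) e3 hR1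
    exact mid_R T (Metric.self_subset_cthickening K)
      (Set.diff_subset_diff_left (Metric.self_subset_cthickening K))
      (Set.diff_subset_diff_right (Metric.ball_subset_ball hR1))
      (Set.diff_subset_diff_left (Metric.self_subset_cthickening K))
      (Set.diff_subset_diff (subset_refl _) (Metric.ball_subset_ball hR1))
      (Metric.cthickening_mono e1 K)
      (Set.diff_subset_diff (Metric.cthickening_mono e1 K)
        (Metric.ball_subset_ball hrR))
      (Set.diff_subset_diff (Metric.cthickening_mono e1 K)
        (Metric.ball_subset_ball e3))
      hp hi1 hb1
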